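/- Fix ρ ∈ (0,1) and x₀ ∈ ℂ. For integers j ≥ 0 define l_j := ρ·2^{−j/4}·2^{−50}, d₀ := (3/4)·ρ, d_j := d_{j−1} − 32·l_{j−1} for j ≥ 1, and the shells S_j := { y ∈ ℂ : d_j − l_j < |y − x₀| < d_j + l_j } (equivalently S_j = ∂B_{d_j}(x₀) + B_{l_j}). Then for every integer N₀ ≥ 200, setting ε_j := 2^{−(N₀+j)} and d_j⁺ := d_j + 8·l_j, the following hold: (i) the closure of the union ⋃_{j≥0} (S_j + B_{8 l_j}) = ⋃_{j≥0} { y : d_j − 9 l_j < |y − x₀| < d_j + 9 l_j } is contained in the annulus 𝔸_{ρ/2, ρ}(x₀); (ii) for every j ≥ 0, (S_j + B_{8 l_j}) ∩ (⋃_{j′ ≠ j} S_{j′}) = ∅; (iii) for every j ≥ 0 and every z ∈ S_j, B_{8·√(ε_j)·ρ}(z) ⊆ 𝔸_{ρ/2, d_j⁺}(x₀) ⊆ 𝔸_{ρ/2, ρ}(x₀). -/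
import Mathlib

open Metric Set

noncomputable section

/-- The open annulus `𝔸_{r₁,r₂}(z) = B_{r₂}(z) ∖ closure(B_{r₁}(z))`. -/
def annul (r₁ r₂ : ℝ) (z : ℂ) : Set ℂ := ball z r₂ \ closedBall z r₁

set_option maxHeartbeats 1000000 in
theorem statement18 (ρ : ℝ) (hρ : ρ ∈ Set.Ioo (0 : ℝ) 1) (x₀ : ℂ)
    (l : ℕ → ℝ) (hl : ∀ j : ℕ, l j = ρ * 2 ^ (-(j : ℝ) / 4) * 2 ^ (-50 : ℝ))
    (d : ℕ → ℝ) (hd0 : d 0 = 3 / 4 * ρ) (hd : ∀ j : ℕ, d (j + 1) = d j - 32 * l j)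
    (N₀ : ℕ) (hN₀ : 200 ≤ N₀)
    (ε : ℕ → ℝ) (hε : ∀ j : ℕ, ε j = 2 ^ (-(((N₀ : ℝ)) + (j : ℝ))))
    (S : ℕ → Set ℂ)
    (hS : ∀ j : ℕ, S j = {y : ℂ | d j - l j < dist y x₀ ∧ dist y x₀ < d j + l j}) :
    closure (⋃ j : ℕ, {y : ℂ | d j - 9 * l j < dist y x₀ ∧ dist y x₀ < d j + 9 * l j})
        ⊆ annul (ρ / 2) ρ x₀ ∧
      (∀ j : ℕ, {y : ℂ | d j - 9 * l j < dist y x₀ ∧ dist y x₀ < d j + 9 * l j} ∩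
          (⋃ (j' : ℕ) (_ : j' ≠ j), S j') = ∅) ∧
      ∀ j : ℕ, ∀ z ∈ S j,
        ball z (8 * Real.sqrt (ε j) * ρ) ⊆ annul (ρ / 2) (d j + 8 * l j) x₀ ∧
          annul (ρ / 2) (d j + 8 * l j) x₀ ⊆ annul (ρ / 2) ρ x₀ := by
  obtain ⟨hρ0, hρ1⟩ := hρ
  have two_pos : (0:ℝ) < 2 := by norm_num
  obtain ⟨κ, hκdef⟩ : ∃ κ : ℝ, κ = (2:ℝ) ^ (-(50:ℝ)) := ⟨_, rfl⟩
  simp only [← hκdef] at hl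
  -- facts about t j := 2^(-j/4)
  have ht_pos : ∀ j : ℕ, 0 < (2:ℝ) ^ (-(j:ℝ)/4) := fun j => Real.rpow_pos_of_pos two_pos _
  have ht_le1 : ∀ j : ℕ, (2:ℝ) ^ (-(j:ℝ)/4) ≤ 1 := fun j =>
    Real.rpow_le_one_of_one_le_of_nonpos (by norm_num)
      (by have : (0:ℝ) ≤ (j:ℝ) := Nat.cast_nonneg j; linarith)
  have ht_anti : ∀ i j : ℕ, i ≤ j → (2:ℝ) ^ (-(j:ℝ)/4) ≤ (2:ℝ) ^ (-(i:ℝ)/4) := by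
    intro i j hij
    apply Real.rpow_le_rpow_of_exponent_le (by norm_num)
    have : (i:ℝ) ≤ (j:ℝ) := Nat.cast_le.mpr hij
    linarith
  have hκ_pos : (0:ℝ) < κ := hκdef ▸ Real.rpow_pos_of_pos two_pos _
  have hκ_eq : κ = ((2:ℝ) ^ (50:ℕ))⁻¹ := by
    rw [hκdef, ← Real.rpow_natCast 2 50, ← Real.rpow_neg (by norm_num)]
    norm_num
  have hκ_small : κ < 1/1000 := by rw [hκ_eq]; norm_num
  have hl_pos : ∀ j, 0 < l j := by
    intro j; rw [hl]
    exact mul_pos (mul_pos hρ0 (ht_pos j)) hκ_pos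
  have hl_anti : ∀ i j : ℕ, i ≤ j → l j ≤ l i := by
    intro i j hij
    rw [hl, hl]
    exact mul_le_mul_of_nonneg_right
      (mul_le_mul_of_nonneg_left (ht_anti i j hij) hρ0.le) hκ_pos.le
  have hl_le : ∀ j, l j ≤ ρ * κ := by
    intro j; rw [hl]
    have h1 := mul_le_mul_of_nonneg_left (ht_le1 j) hρ0.le
    nlinarith [mul_le_mul_of_nonneg_right h1 hκ_pos.le]
  -- d facts
  have hd_succ : ∀ j, d (j+1) ≤ d j := fun j => by
    rw [hd]; have := hl_pos j; linarith
  have hd_anti : Antitone d := antitone_nat_of_succ_le hd_succ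
  have hd_ub : ∀ j, d j ≤ 3/4 * ρ := fun j => by
    have := hd_anti (Nat.zero_le j); rw [hd0] at this; exact this
  -- the step factor 2^(-1/4) ≤ 6/7
  have ha_pos : (0:ℝ) < (2:ℝ) ^ (-(1:ℝ)/4) := Real.rpow_pos_of_pos two_pos _
  have ha4 : ((2:ℝ) ^ (-(1:ℝ)/4)) ^ (4:ℕ) = 1/2 := by
    rw [← Real.rpow_natCast ((2:ℝ) ^ (-(1:ℝ)/4)) 4, ← Real.rpow_mul (le_of_lt two_pos)]
    norm_num
  have ha : (2:ℝ) ^ (-(1:ℝ)/4) ≤ 6/7 := by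
    by_contra h
    push_neg at h
    have h2 : ((6:ℝ)/7) ^ (4:ℕ) < ((2:ℝ) ^ (-(1:ℝ)/4)) ^ (4:ℕ) :=
      pow_lt_pow_left₀ h (by norm_num) (by norm_num)
    rw [ha4] at h2; norm_num at h2
  have hts : ∀ j : ℕ, (2:ℝ) ^ (-((j:ℕ)+1:ℝ)/4) = (2:ℝ) ^ (-(j:ℝ)/4) * (2:ℝ) ^ (-(1:ℝ)/4) := by
    intro j
    rw [← Real.rpow_add two_pos]
    congr 1
    ring
  have hd_lb : ∀ j : ℕ, 3/4*ρ - 224*(ρ*κ)*(1 - (2:ℝ)^(-(j:ℝ)/4)) ≤ d j := by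
    intro j
    induction j with
    | zero =>
      have ht0 : (2:ℝ) ^ (-((0:ℕ):ℝ)/4) = 1 := by norm_num
      rw [hd0, ht0]; nlinarith [mul_pos hρ0 hκ_pos]
    | succ n ih =>
      have hcast : (((n+1:ℕ)):ℝ) = (n:ℝ) + 1 := by push_cast; ring
      rw [hd n, hl n]
      have key : 224*(ρ*κ)*(2:ℝ)^(-(n:ℝ)/4) * ((2:ℝ)^(-(1:ℝ)/4))
          ≤ 224*(ρ*κ)*(2:ℝ)^(-(n:ℝ)/4) * (6/7) :=
        mul_le_mul_of_nonneg_left ha (by positivity)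
      have hstep : (2:ℝ) ^ (-(((n+1:ℕ)):ℝ)/4) = (2:ℝ) ^ (-(n:ℝ)/4) * (2:ℝ) ^ (-(1:ℝ)/4) := by
        rw [hcast]; exact hts n
      rw [hstep]
      nlinarith [ih, key]
  have hd_lb' : ∀ j, 3/4*ρ - 224*(ρ*κ) ≤ d j := by
    intro j
    have h1 := hd_lb j
    nlinarith [ht_pos j, mul_pos hρ0 hκ_pos]
  have hκρ : (0:ℝ) < ρ/1000 - ρ*κ := by
    nlinarith [mul_pos (show (0:ℝ) < 1/1000 - κ by linarith) hρ0]
  refine ⟨?_, ?_, ?_⟩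
  · -- (i) closure in annulus
    have hA : IsClosed (closedBall x₀ (3/4*ρ + 9*(ρ*κ)) \
        ball x₀ (3/4*ρ - 233*(ρ*κ))) :=
      IsClosed.sdiff Metric.isClosed_closedBall isOpen_ball
    refine (closure_minimal ?_ hA).trans ?_
    · intro y hy
      simp only [mem_iUnion, mem_setOf_eq] at hy
      obtain ⟨j, h1, h2⟩ := hy
      have h3 := hd_ub j
      have h4 := hl_le j
      have h5 := hd_lb' j
      constructor
      · rw [mem_closedBall]; linarith
      · simp only [mem_ball, not_lt]; linarith
    · intro y hy
      obtain ⟨h1, h2⟩ := hy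
      rw [mem_closedBall] at h1
      simp only [mem_ball, not_lt] at h2
      simp only [annul, mem_diff, mem_ball, mem_closedBall, not_le]
      constructor <;> linarith
  · -- (ii) separation
    intro j
    apply eq_empty_iff_forall_notMem.mpr
    intro y hy
    obtain ⟨hy1, hy2⟩ := hy
    obtain ⟨h1, h2⟩ := hy1
    simp only [mem_iUnion] at hy2
    obtain ⟨j', hj', hyS⟩ := hy2
    rw [hS j'] at hyS
    obtain ⟨h3, h4⟩ := hyS
    rcases hj'.lt_or_gt with hlt | hlt
    · -- j' < j
      have hdd : d j ≤ d (j'+1) := hd_anti (Nat.succ_le_of_lt hlt)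
      rw [hd j'] at hdd
      have hll : l j ≤ l j' := hl_anti j' j (le_of_lt hlt)
      have := hl_pos j'
      linarith
    · -- j < j'
      have hdd : d j' ≤ d (j+1) := hd_anti (Nat.succ_le_of_lt hlt)
      rw [hd j] at hdd
      have hll : l j' ≤ l j := hl_anti j j' (le_of_lt hlt)
      have := hl_pos j
      linarith
  · -- (iii)
    intro j z hz
    rw [hS j] at hz
    obtain ⟨hz1, hz2⟩ := hz
    -- sqrt bound
    have hsq : Real.sqrt (ε j) = (2:ℝ) ^ ((-(N₀:ℝ) - (j:ℝ))/2) := by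
      have h1 : ε j = ((2:ℝ) ^ ((-(N₀:ℝ) - (j:ℝ))/2)) ^ (2:ℕ) := by
        rw [hε, ← Real.rpow_natCast ((2:ℝ) ^ ((-(N₀:ℝ) - (j:ℝ))/2)) 2,
          ← Real.rpow_mul (le_of_lt two_pos)]
        congr 1; push_cast; ring
      rw [h1, Real.sqrt_sq (le_of_lt (Real.rpow_pos_of_pos two_pos _))]
    have hsq_le : Real.sqrt (ε j) ≤ (2:ℝ) ^ (-(100:ℝ)) * (2:ℝ) ^ (-(j:ℝ)/4) := by
      rw [hsq, ← Real.rpow_add two_pos]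
      apply Real.rpow_le_rpow_of_exponent_le (by norm_num)
      have hN : (200:ℝ) ≤ (N₀:ℝ) := by exact_mod_cast hN₀
      have hj : (0:ℝ) ≤ (j:ℝ) := Nat.cast_nonneg j
      linarith
    have h100_eq : (2:ℝ) ^ (-(100:ℝ)) = ((2:ℝ) ^ (100:ℕ))⁻¹ := by
      rw [← Real.rpow_natCast 2 100, ← Real.rpow_neg (by norm_num)]
      norm_num
    have hrl : 8 * Real.sqrt (ε j) * ρ < l j := by
      rw [hl]
      have hkey := mul_le_mul_of_nonneg_left hsq_le (show (0:ℝ) ≤ 8*ρ by linarith)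
      rw [h100_eq] at hkey
      rw [hκ_eq]
      have hpos := mul_pos hρ0 (ht_pos j)
      nlinarith
    have hεnn : 0 ≤ Real.sqrt (ε j) := Real.sqrt_nonneg _
    refine ⟨?_, ?_⟩
    · intro w hw
      rw [mem_ball] at hw
      have htri1 : dist w x₀ ≤ dist w z + dist z x₀ := dist_triangle _ _ _
      have htri2 : dist z x₀ ≤ dist z w + dist w x₀ := dist_triangle _ _ _
      rw [dist_comm z w] at htri2
      simp only [annul, mem_diff, mem_ball, mem_closedBall, not_le]
      have hlb := hd_lb' j
      have hle := hl_le j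
      have hlp := hl_pos j
      constructor
      · linarith
      · linarith
    · intro w hw
      simp only [annul, mem_diff, mem_ball, mem_closedBall, not_le] at hw ⊢
      refine ⟨?_, hw.2⟩
      have h3 := hd_ub j
      have h4 := hl_le j
      linarith [hw.1]
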